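/- Let α ∈ (1,2], β ∈ (0,1), ξ ∈ (0,1). Then for every continuous function y : [0,1] → ℝ and every t ∈ [0,1], (1/Γ(α))·∫₀ᵗ (t−s)^{α−1} y(s) ds + (ξ/((1−ξ)·Γ(α)))·∫₀¹ (1−s)^{α−1} y(s) ds − (Γ(2−β)/Γ(α−β))·(t + ξ/(1−ξ))·∫₀¹ (1−s)^{α−β−1} y(s) ds = ∫₀¹ G(t,s) y(s) ds, i.e. the solution u(t) = Iᵅy(t) + (ξ/(1−ξ))Iᵅy(1) − Γ(2−β)(t + ξ/(1−ξ))I^{α−β}y(1) of the linear boundary value problem ᶜDᵅu(t) = y(t), u(0) = ξu(1), ᶜDᵝu(0) = ξ·ᶜDᵝu(1) has the Green-function representation u(t) = ∫₀¹ G(t,s) y(s) ds. -/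

import Mathlib

open Real MeasureTheory Set

/-- The Green function of the fractional boundary value problem. -/
noncomputable def G (α β ξ : ℝ) (t s : ℝ) : ℝ :=
  if s ≤ t then
    ((1 - ξ) * (t - s) ^ (α - 1) + ξ * (1 - s) ^ (α - 1)) / (Real.Gamma α * (1 - ξ))
      - Real.Gamma (2 - β) * (ξ + (1 - ξ) * t) * (1 - s) ^ (α - β - 1)
          / (Real.Gamma (α - β) * (1 - ξ))
  else
    ξ * (1 - s) ^ (α - 1) / (Real.Gamma α * (1 - ξ))
      - Real.Gamma (2 - β) * (ξ + (1 - ξ) * t) * (1 - s) ^ (α - β - 1)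
          / (Real.Gamma (α - β) * (1 - ξ))

/-- `G* = sup_{t ∈ [0,1]} ∫₀¹ |G(t,s)| ds`. -/
noncomputable def Gstar (α β ξ : ℝ) : ℝ :=
  ⨆ t : Set.Icc (0 : ℝ) 1, ∫ s in (0 : ℝ)..1, |G α β ξ (t : ℝ) s|

/-- Green-function representation of the solution of the linear BVP
`ᶜDᵅu = y`, `u(0) = ξ u(1)`, `ᶜDᵝu(0) = ξ ᶜDᵝu(1)`. -/
theorem green_representation (α β ξ : ℝ) (hα : 1 < α ∧ α ≤ 2) (hβ : 0 < β ∧ β < 1)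
    (hξ : 0 < ξ ∧ ξ < 1) (y : ℝ → ℝ) (hy : ContinuousOn y (Set.Icc 0 1))
    (t : ℝ) (ht : t ∈ Set.Icc (0 : ℝ) 1) :
    (1 / Real.Gamma α) * (∫ s in (0 : ℝ)..t, (t - s) ^ (α - 1) * y s)
      + (ξ / ((1 - ξ) * Real.Gamma α)) * (∫ s in (0 : ℝ)..1, (1 - s) ^ (α - 1) * y s)
      - (Real.Gamma (2 - β) / Real.Gamma (α - β)) * (t + ξ / (1 - ξ))
          * (∫ s in (0 : ℝ)..1, (1 - s) ^ (α - β - 1) * y s)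
    = ∫ s in (0 : ℝ)..1, G α β ξ t s * y s := by
  obtain ⟨hα1, hα2⟩ := hα
  obtain ⟨hβ0, hβ1⟩ := hβ
  obtain ⟨hξ0, hξ1⟩ := hξ
  obtain ⟨ht0, ht1⟩ := ht
  have hξ' : (1 : ℝ) - ξ ≠ 0 := by linarith
  have hΓα : Real.Gamma α ≠ 0 := (Real.Gamma_pos_of_pos (by linarith)).ne'
  have hΓαβ : Real.Gamma (α - β) ≠ 0 := (Real.Gamma_pos_of_pos (by linarith)).ne'
  have hΓ2β : Real.Gamma (2 - β) ≠ 0 := (Real.Gamma_pos_of_pos (by linarith)).ne'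
  -- continuity of y on relevant intervals
  have hy01 : ContinuousOn y (Set.uIcc (0:ℝ) 1) := by
    rwa [Set.uIcc_of_le zero_le_one]
  have hy0t : ContinuousOn y (Set.uIcc (0:ℝ) t) := by
    rw [Set.uIcc_of_le ht0]
    exact hy.mono (Set.Icc_subset_Icc le_rfl ht1)
  -- integrability facts
  have hint1 : IntervalIntegrable (fun s => (1 - s) ^ (α - 1) * y s) volume 0 1 := by
    have h : IntervalIntegrable (fun s : ℝ => (1 - s) ^ (α - 1)) volume 0 1 := by
      simpa using
        (intervalIntegral.intervalIntegrable_rpow' (r := α - 1) (a := 0) (b := 1)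
          (by linarith)).comp_sub_left 1 |>.symm
    exact h.mul_continuousOn hy01
  have hint2 : IntervalIntegrable (fun s => (1 - s) ^ (α - β - 1) * y s) volume 0 1 := by
    have h : IntervalIntegrable (fun s : ℝ => (1 - s) ^ (α - β - 1)) volume 0 1 := by
      simpa using
        (intervalIntegral.intervalIntegrable_rpow' (r := α - β - 1) (a := 0) (b := 1)
          (by linarith)).comp_sub_left 1 |>.symm
    exact h.mul_continuousOn hy01
  have hint3 : IntervalIntegrable (fun s => (t - s) ^ (α - 1) * y s) volume 0 t := by
    have h : IntervalIntegrable (fun s : ℝ => (t - s) ^ (α - 1)) volume 0 t := by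
      simpa using
        (intervalIntegral.intervalIntegrable_rpow' (r := α - 1) (a := 0) (b := t)
          (by linarith)).comp_sub_left t |>.symm
    exact h.mul_continuousOn hy0t
  -- the "base" part of the Green function
  set base : ℝ → ℝ := fun s =>
    ξ * (1 - s) ^ (α - 1) / (Real.Gamma α * (1 - ξ))
      - Real.Gamma (2 - β) * (ξ + (1 - ξ) * t) * (1 - s) ^ (α - β - 1)
          / (Real.Gamma (α - β) * (1 - ξ)) with hbase
  have hbase_eq : ∀ s : ℝ, base s * y s =
      (ξ / (Real.Gamma α * (1 - ξ))) * ((1 - s) ^ (α - 1) * y s)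
        - (Real.Gamma (2 - β) * (ξ + (1 - ξ) * t) / (Real.Gamma (α - β) * (1 - ξ)))
            * ((1 - s) ^ (α - β - 1) * y s) := by
    intro s; simp only [hbase]; ring
  have hbase_int : IntervalIntegrable (fun s => base s * y s) volume 0 1 := by
    apply IntervalIntegrable.congr_ae ((hint1.const_mul _).sub (hint2.const_mul _))
    filter_upwards with s
    exact (hbase_eq s).symm
  -- decompose G as indicator part + base
  have hG : ∀ s : ℝ, G α β ξ t s =
      (if s ≤ t then (t - s) ^ (α - 1) / Real.Gamma α else 0) + base s := by
    intro s
    unfold G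
    by_cases h : s ≤ t
    · simp only [h, if_true, hbase]
      field_simp
      ring
    · simp only [h, if_false, hbase, zero_add]
  -- the indicator part
  set f1 : ℝ → ℝ := fun s => (if s ≤ t then (t - s) ^ (α - 1) / Real.Gamma α else 0) * y s
    with hf1
  have hf1_int_0t : IntervalIntegrable f1 volume 0 t := by
    apply IntervalIntegrable.congr_ae (hint3.div_const (Real.Gamma α))
    filter_upwards [ae_restrict_mem measurableSet_uIoc] with s hs
    rw [Set.uIoc_of_le ht0] at hs
    simp only [hf1, if_pos hs.2]
    ring
  have hf1_int_t1 : IntervalIntegrable f1 volume t 1 := by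
    apply IntervalIntegrable.congr_ae (intervalIntegrable_const (c := (0:ℝ)))
    filter_upwards [ae_restrict_mem measurableSet_uIoc] with s hs
    rw [Set.uIoc_of_le ht1] at hs
    simp [hf1, not_le.mpr hs.1]
  have hf1_int : IntervalIntegrable f1 volume 0 1 := hf1_int_0t.trans hf1_int_t1
  -- main decomposition of the integral
  have hG_int_eq : (∫ s in (0:ℝ)..1, G α β ξ t s * y s)
      = (∫ s in (0:ℝ)..1, f1 s) + ∫ s in (0:ℝ)..1, base s * y s := by
    rw [← intervalIntegral.integral_add hf1_int hbase_int]
    apply intervalIntegral.integral_congr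
    intro s _
    show G α β ξ t s * y s = f1 s + base s * y s
    rw [hG s]; simp only [hf1]; ring
  -- compute the indicator part
  have h1 : (∫ s in (0:ℝ)..1, f1 s)
      = (1 / Real.Gamma α) * ∫ s in (0:ℝ)..t, (t - s) ^ (α - 1) * y s := by
    rw [← intervalIntegral.integral_add_adjacent_intervals hf1_int_0t hf1_int_t1]
    have e1 : (∫ s in (0:ℝ)..t, f1 s)
        = ∫ s in (0:ℝ)..t, (t - s) ^ (α - 1) * y s / Real.Gamma α := by
      apply intervalIntegral.integral_congr
      intro s hs
      rw [Set.uIcc_of_le ht0] at hs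
      simp only [hf1, if_pos hs.2]
      ring
    have e2 : (∫ s in t..(1:ℝ), f1 s) = 0 := by
      rw [intervalIntegral.integral_of_le ht1]
      rw [MeasureTheory.setIntegral_congr_fun measurableSet_Ioc
        (g := fun _ => (0:ℝ)) (fun s hs => by simp [hf1, not_le.mpr hs.1])]
      simp
    rw [e1, e2, add_zero, intervalIntegral.integral_div]
    ring
  -- compute the base part
  have h2 : (∫ s in (0:ℝ)..1, base s * y s)
      = (ξ / ((1 - ξ) * Real.Gamma α)) * (∫ s in (0:ℝ)..1, (1 - s) ^ (α - 1) * y s)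
        - (Real.Gamma (2 - β) / Real.Gamma (α - β)) * (t + ξ / (1 - ξ))
            * (∫ s in (0:ℝ)..1, (1 - s) ^ (α - β - 1) * y s) := by
    rw [intervalIntegral.integral_congr (g := fun s =>
        (ξ / (Real.Gamma α * (1 - ξ))) * ((1 - s) ^ (α - 1) * y s)
          - (Real.Gamma (2 - β) * (ξ + (1 - ξ) * t) / (Real.Gamma (α - β) * (1 - ξ)))
              * ((1 - s) ^ (α - β - 1) * y s)) (fun s _ => hbase_eq s)]
    rw [intervalIntegral.integral_sub (hint1.const_mul _) (hint2.const_mul _),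
      intervalIntegral.integral_const_mul, intervalIntegral.integral_const_mul]
    have c1 : ξ / (Real.Gamma α * (1 - ξ)) = ξ / ((1 - ξ) * Real.Gamma α) := by
      rw [mul_comm]
    have c2 : Real.Gamma (2 - β) * (ξ + (1 - ξ) * t) / (Real.Gamma (α - β) * (1 - ξ))
        = Real.Gamma (2 - β) / Real.Gamma (α - β) * (t + ξ / (1 - ξ)) := by
      have h : t + ξ / (1 - ξ) = (ξ + (1 - ξ) * t) / (1 - ξ) := by
        field_simp
        ring
      rw [h, div_mul_div_comm, mul_comm (Real.Gamma (α - β)) (1 - ξ)]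
    rw [c1, c2]
  rw [hG_int_eq, h1, h2]
  ring
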